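/- Given data points (x_i, y_i), i = 1,…,n, let C be the 4×4 Taubin matrix with first row (4M_z, 2M_x, 2M_y, 0), second row (2M_x, n, 0, 0), third row (2M_y, 0, n, 0), fourth row (0,0,0,0), where M_z = Σ_i (x_i²+y_i²), M_x = Σ_i x_i, M_y = Σ_i y_i. Then for every vector v = (A,B,C',D) ∈ ℝ⁴ one has vᵀCv = Σ_{i=1}^n ((2Ax_i + B)² + (2Ay_i + C')²) ≥ 0, so C is symmetric positive semidefinite; and if moreover M = Σ_i v_i v_iᵀ (with v_i = (x_i²+y_i², x_i, y_i, 1)ᵀ) is positive definite, then every complex root of the polynomial η ↦ det(M − ηC) is a positive real number. -/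

import Mathlib

open Matrix

/-- The 4×4 moment matrix `M = ∑ᵢ vᵢ vᵢᵀ` with `vᵢ = (zᵢ, xᵢ, yᵢ, 1)ᵀ`,
`zᵢ = xᵢ² + yᵢ²`. -/
noncomputable def momentM (n : ℕ) (x y : Fin n → ℝ) : Matrix (Fin 4) (Fin 4) ℝ :=
  ∑ i, Matrix.vecMulVec ![x i ^ 2 + y i ^ 2, x i, y i, 1]
    ![x i ^ 2 + y i ^ 2, x i, y i, 1]

/-- The 4×4 Taubin constraint matrix, built from the moments
`M_z = ∑ (xᵢ² + yᵢ²)`, `M_x = ∑ xᵢ`, `M_y = ∑ yᵢ`. -/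
noncomputable def taubinC (n : ℕ) (x y : Fin n → ℝ) : Matrix (Fin 4) (Fin 4) ℝ :=
  !![4 * ∑ i, (x i ^ 2 + y i ^ 2), 2 * ∑ i, x i, 2 * ∑ i, y i, 0;
     2 * ∑ i, x i, (n : ℝ), 0, 0;
     2 * ∑ i, y i, 0, (n : ℝ), 0;
     0, 0, 0, 0]

-- symmetric dot product swap
lemma dp_swap {N : Matrix (Fin 4) (Fin 4) ℝ} (hsym : N.IsSymm) (a b : Fin 4 → ℝ) :
    a ⬝ᵥ N *ᵥ b = b ⬝ᵥ N *ᵥ a := by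
  rw [Matrix.dotProduct_mulVec, dotProduct_comm, ← Matrix.mulVec_transpose, hsym]

lemma coe_dp (N : Matrix (Fin 4) (Fin 4) ℝ) (a b : Fin 4 → ℝ) :
    (fun i => ((a i : ℂ))) ⬝ᵥ ((N.map Complex.ofReal) *ᵥ fun i => ((b i : ℂ)))
      = ((a ⬝ᵥ N *ᵥ b : ℝ) : ℂ) := by
  have h1 : (N.map Complex.ofReal) *ᵥ (fun i => ((b i : ℂ)))
      = fun i => ((N *ᵥ b) i : ℂ) := by
    funext i
    exact (RingHom.map_mulVec Complex.ofRealHom N b i).symm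
  rw [h1]
  exact (RingHom.map_dotProduct Complex.ofRealHom a (N *ᵥ b)).symm

lemma quad_ofReal {N : Matrix (Fin 4) (Fin 4) ℝ} (hsym : N.IsSymm) (v : Fin 4 → ℂ) :
    star v ⬝ᵥ (N.map Complex.ofReal *ᵥ v)
      = (((fun i => (v i).re) ⬝ᵥ N *ᵥ (fun i => (v i).re)
          + (fun i => (v i).im) ⬝ᵥ N *ᵥ (fun i => (v i).im) : ℝ) : ℂ) := by
  set p : Fin 4 → ℝ := fun i => (v i).re with hp
  set q : Fin 4 → ℝ := fun i => (v i).im with hq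
  set P : Fin 4 → ℂ := fun i => ((p i : ℂ)) with hP
  set Q : Fin 4 → ℂ := fun i => ((q i : ℂ)) with hQ
  have hv : v = P + Complex.I • Q := by
    funext i
    simp [hP, hQ, hp, hq, Complex.ext_iff, mul_comm]
  have hstar : star v = P - Complex.I • Q := by
    funext i
    simp [hP, hQ, hp, hq, Complex.ext_iff, mul_comm]
  set A := N.map Complex.ofReal with hA
  calc star v ⬝ᵥ (A *ᵥ v) = (P - Complex.I • Q) ⬝ᵥ (A *ᵥ (P + Complex.I • Q)) := by
        rw [← hv, ← hstar]
    _ = P ⬝ᵥ (A *ᵥ P) + Complex.I * (P ⬝ᵥ (A *ᵥ Q))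
        - (Complex.I * (Q ⬝ᵥ (A *ᵥ P)) + Complex.I * (Complex.I * (Q ⬝ᵥ (A *ᵥ Q)))) := by
        rw [Matrix.mulVec_add, Matrix.mulVec_smul, sub_dotProduct, dotProduct_add,
          dotProduct_add, smul_dotProduct, dotProduct_smul, dotProduct_smul]
        simp [smul_eq_mul, mul_add]
    _ = _ := by
        rw [hA, coe_dp, coe_dp, coe_dp, coe_dp, dp_swap hsym q p]
        push_cast
        ring_nf
        rw [Complex.I_sq]
        ring

lemma taubin_quad(n : ℕ) (x y : Fin n → ℝ) (v : Fin 4 → ℝ) :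
    v ⬝ᵥ (taubinC n x y).mulVec v
      = ∑ i, ((2 * v 0 * x i + v 1) ^ 2 + (2 * v 0 * y i + v 2) ^ 2) := by
  have expand : ∀ i, (2 * v 0 * x i + v 1) ^ 2 + (2 * v 0 * y i + v 2) ^ 2
      = (4 * v 0 ^ 2) * (x i ^ 2 + y i ^ 2) + (4 * v 0 * v 1) * x i
        + (4 * v 0 * v 2) * y i + (v 1 ^ 2 + v 2 ^ 2) := fun i => by ring
  rw [Finset.sum_congr rfl fun i _ => expand i]
  simp only [Finset.sum_add_distrib, ← Finset.mul_sum, Finset.sum_const,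
    Finset.card_univ, Fintype.card_fin, nsmul_eq_mul]
  simp [taubinC, Matrix.mulVec, dotProduct, Fin.sum_univ_four, Matrix.vecHead,
    Matrix.vecTail, Finset.sum_add_distrib]
  ring

lemma taubin_symm (n : ℕ) (x y : Fin n → ℝ) : (taubinC n x y).IsSymm := by
  unfold Matrix.IsSymm
  ext i j
  fin_cases i <;> fin_cases j <;> simp [taubinC, Matrix.vecHead, Matrix.vecTail]

lemma momentM_symm (n : ℕ) (x y : Fin n → ℝ) : (momentM n x y).IsSymm := by
  unfold Matrix.IsSymm
  ext i j
  fin_cases i <;> fin_cases j <;>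
    simp [momentM, Matrix.transpose_apply, Matrix.sum_apply, Matrix.vecMulVec_apply, mul_comm]

/-- For every `v = (A,B,C',D)` one has
`vᵀCv = ∑ᵢ ((2Axᵢ + B)² + (2Ayᵢ + C')²) ≥ 0`, so the Taubin matrix `C` is
symmetric positive semidefinite; and if the moment matrix `M` is positive
definite, every complex root of `η ↦ det(M - ηC)` is a positive real number. -/
theorem stmt_19 (n : ℕ) (x y : Fin n → ℝ) :
    (∀ v : Fin 4 → ℝ,
      v ⬝ᵥ (taubinC n x y).mulVec v
        = ∑ i, ((2 * v 0 * x i + v 1) ^ 2 + (2 * v 0 * y i + v 2) ^ 2)) ∧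
    (∀ v : Fin 4 → ℝ, 0 ≤ v ⬝ᵥ (taubinC n x y).mulVec v) ∧
    (taubinC n x y).IsSymm ∧
    (taubinC n x y).PosSemidef ∧
    ((momentM n x y).PosDef →
      ∀ η : ℂ,
        ((momentM n x y).map Complex.ofReal
            - η • (taubinC n x y).map Complex.ofReal).det = 0 →
          η.im = 0 ∧ 0 < η.re) := by
  have hquad := taubin_quad n x y
  have hnonneg : ∀ v : Fin 4 → ℝ, 0 ≤ v ⬝ᵥ (taubinC n x y).mulVec v := by
    intro v
    rw [hquad v]
    exact Finset.sum_nonneg fun i _ => by positivity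
  have hCsym := taubin_symm n x y
  have hpsd : (taubinC n x y).PosSemidef := by
    refine Matrix.posSemidef_iff_dotProduct_mulVec.mpr ⟨?_, fun v => ?_⟩
    · rwa [Matrix.IsHermitian, conjTranspose_eq_transpose_of_trivial]
    · simpa using hnonneg v
  refine ⟨hquad, hnonneg, hCsym, hpsd, ?_⟩
  intro hM η hdet
  obtain ⟨v, hv0, hveq⟩ := (Matrix.exists_mulVec_eq_zero_iff).mpr hdet
  set p : Fin 4 → ℝ := fun i => (v i).re with hp
  set q : Fin 4 → ℝ := fun i => (v i).im with hq
  -- the generalized eigen-equation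
  have heig : (momentM n x y).map Complex.ofReal *ᵥ v
      = η • ((taubinC n x y).map Complex.ofReal *ᵥ v) := by
    have := hveq
    rw [Matrix.sub_mulVec, Matrix.smul_mulVec, sub_eq_zero] at this
    exact this
  have hquadC : star v ⬝ᵥ ((momentM n x y).map Complex.ofReal *ᵥ v)
      = η * (star v ⬝ᵥ ((taubinC n x y).map Complex.ofReal *ᵥ v)) := by
    rw [heig, dotProduct_smul, smul_eq_mul]
  rw [quad_ofReal (momentM_symm n x y) v, quad_ofReal hCsym v] at hquadC
  set a : ℝ := p ⬝ᵥ momentM n x y *ᵥ p + q ⬝ᵥ momentM n x y *ᵥ q with ha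
  set b : ℝ := p ⬝ᵥ taubinC n x y *ᵥ p + q ⬝ᵥ taubinC n x y *ᵥ q with hb
  have hbnn : 0 ≤ b := by
    have h1 := hnonneg p; have h2 := hnonneg q
    simp only [hb]; linarith
  have hapos : 0 < a := by
    have hne : p ≠ 0 ∨ q ≠ 0 := by
      by_contra h
      push_neg at h
      apply hv0
      funext i
      have h1 : (v i).re = 0 := congrFun h.1 i
      have h2 : (v i).im = 0 := congrFun h.2 i
      exact Complex.ext h1 h2
    have hMp : ∀ w : Fin 4 → ℝ, 0 ≤ w ⬝ᵥ momentM n x y *ᵥ w := by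
      intro w
      have := hM.posSemidef.dotProduct_mulVec_nonneg w
      simpa using this
    rcases hne with h | h
    · have := hM.dotProduct_mulVec_pos h
      simp only [star_trivial] at this
      have h2 := hMp q
      simp only [ha]; linarith
    · have := hM.dotProduct_mulVec_pos h
      simp only [star_trivial] at this
      have h2 := hMp p
      simp only [ha]; linarith
  have hre : a = η.re * b := by
    have := congrArg Complex.re hquadC
    simpa [Complex.mul_re] using this
  have him : 0 = η.im * b := by
    have := congrArg Complex.im hquadC
    simpa [Complex.mul_im] using this
  have hbpos : 0 < b := by
    rcases hbnn.lt_or_eq with h | h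
    · exact h
    · exfalso; rw [← h] at hre; simp at hre; linarith
  constructor
  · have := him.symm
    rcases mul_eq_zero.mp this with h | h
    · exact h
    · exact absurd h (ne_of_gt hbpos)
  · nlinarith
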